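/- Every non-unital extreme point M of the convex set of qubit channels has a Choi matrix C_{M†∘M} that is positive definite (full rank). -/

import Mathlib

open Matrix Kronecker BigOperators
open scoped ComplexOrder

noncomputable section

abbrev Mat (d : ℕ) := Matrix (Fin d) (Fin d) ℂ

section Defs

variable {α β α₁ β₁ α₂ β₂ γ δ : Type*}
variable [Fintype α] [DecidableEq α] [Fintype β] [DecidableEq β]
variable [Fintype α₁] [DecidableEq α₁] [Fintype β₁] [DecidableEq β₁]
variable [Fintype α₂] [DecidableEq α₂] [Fintype β₂] [DecidableEq β₂]
variable [Fintype γ] [DecidableEq γ] [Fintype δ] [DecidableEq δ]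

/-- The Choi matrix of a map on matrices. -/
def choiMatrix (S : Matrix α α ℂ → Matrix β β ℂ) : Matrix (β × α) (β × α) ℂ :=
  ∑ i : α, ∑ j : α, (S (single i j 1)) ⊗ₖ (single i j 1)

/-- Completely positive (via Choi's theorem). -/
def IsCPMap (S : Matrix α α ℂ → Matrix β β ℂ) : Prop := (choiMatrix S).PosSemidef

/-- Trace preserving. -/
def IsTPMap (S : Matrix α α ℂ → Matrix β β ℂ) : Prop := ∀ X, (S X).trace = X.trace

/-- A quantum channel: completely positive and trace preserving. -/
def IsQChannel (S : Matrix α α ℂ → Matrix β β ℂ) : Prop := IsCPMap S ∧ IsTPMap S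

/-- A density operator. -/
def IsDensity (ρ : Matrix α α ℂ) : Prop := ρ.PosSemidef ∧ ρ.trace = 1

/-- The square root of a positive semidefinite matrix, as `Matrix.PosSemidef.sqrt` was defined
in Mathlib (Dec 2024); removed from current Mathlib. -/
def Matrix.PosSemidef.sqrt {A : Matrix α α ℂ} (hA : A.PosSemidef) : Matrix α α ℂ :=
  hA.1.eigenvectorUnitary.1 * diagonal ((↑) ∘ (√·) ∘ hA.1.eigenvalues) *
    (star hA.1.eigenvectorUnitary : Matrix α α ℂ)

/-- Trace norm of a matrix: trace of √(AᴴA). -/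
def traceNorm (A : Matrix α α ℂ) : ℝ :=
  ((Matrix.posSemidef_conjTranspose_mul_self A).sqrt.trace).re

/-- Hilbert–Schmidt adjoint of a map on matrices. -/
def hsAdjoint (S : Matrix α α ℂ → Matrix β β ℂ) (X : Matrix β β ℂ) : Matrix α α ℂ :=
  ∑ i : α, ∑ j : α, ((S (single i j 1))ᴴ * X).trace • single i j 1

/-- Generalized (Moore–Penrose) inverse of `σ^{1/2}`, for Hermitian `σ`,
via spectral decomposition (and junk value `0` otherwise). -/
def pinvSqrt (σ : Matrix α α ℂ) : Matrix α α ℂ :=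
  if hσ : σ.IsHermitian then
    (hσ.eigenvectorUnitary : Matrix α α ℂ) *
      Matrix.diagonal (fun i => (((Real.sqrt (hσ.eigenvalues i))⁻¹ : ℝ) : ℂ)) *
      (star (hσ.eigenvectorUnitary : Matrix α α ℂ))
  else 0

/-- Quantum χ²-divergence `Tr((ρ-σ) σ^{-1/2} (ρ-σ) σ^{-1/2})`. -/
def chiSq (ρ σ : Matrix α α ℂ) : ℝ :=
  (((ρ - σ) * pinvSqrt σ * (ρ - σ) * pinvSqrt σ).trace).re

/-- Support inclusion `supp ρ ⊆ supp σ` (i.e. `ker σ ⊆ ker ρ`). -/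
def SuppIncl (ρ σ : Matrix α α ℂ) : Prop :=
  ∀ v : α → ℂ, σ *ᵥ v = 0 → ρ *ᵥ v = 0

/-- Separable bipartite states. -/
def IsSepState (σ : Matrix (α × β) (α × β) ℂ) : Prop :=
  ∃ (m : ℕ) (p : Fin m → ℝ) (ρA : Fin m → Matrix α α ℂ) (ρB : Fin m → Matrix β β ℂ),
    (∀ i, 0 ≤ p i) ∧ (∑ i, p i = 1) ∧ (∀ i, IsDensity (ρA i)) ∧ (∀ i, IsDensity (ρB i)) ∧
    σ = ∑ i, (p i : ℂ) • (ρA i ⊗ₖ ρB i)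

/-- χ²-divergence to the set of separable states across the cut `α : β`. -/
def chiSqSep (τ : Matrix (α × β) (α × β) ℂ) : ℝ :=
  sInf {r | ∃ σ, IsDensity σ ∧ IsSepState σ ∧ SuppIncl τ σ ∧ r = chiSq τ σ}

/-- Trace-norm contraction coefficient. -/
def etaTr (T : Matrix α α ℂ → Matrix β β ℂ) : ℝ :=
  sSup {r | ∃ ρ σ, IsDensity ρ ∧ IsDensity σ ∧ ρ ≠ σ ∧
    r = traceNorm (T ρ - T σ) / traceNorm (ρ - σ)}

/-- χ² contraction coefficient. -/
def etaChi (T : Matrix α α ℂ → Matrix β β ℂ) : ℝ :=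
  sSup {r | ∃ ρ σ, IsDensity ρ ∧ IsDensity σ ∧ SuppIncl ρ σ ∧ ρ ≠ σ ∧
    r = chiSq (T ρ) (T σ) / chiSq ρ σ}

/-- Minimal eigenvalue of a (Hermitian) matrix. -/
def lamMin (M : Matrix α α ℂ) : ℝ :=
  if h : M.IsHermitian then ⨅ i, h.eigenvalues i else 0

/-- The rank-one projector `|ψ⟩⟨ψ|`. -/
def projVec (ψ : α → ℂ) : Matrix α α ℂ := vecMulVec ψ (star ψ)

/-- Unit vector (pure state). -/
def IsUnitVec (ψ : α → ℂ) : Prop := star ψ ⬝ᵥ ψ = 1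

/-- Partial trace over the second tensor factor. -/
def ptraceSnd (M : Matrix (α × β) (α × β) ℂ) : Matrix α α ℂ :=
  fun i j => ∑ e : β, M (i, e) (j, e)

-- Square root of a positive semidefinite matrix (junk value `0` otherwise).
open Classical in
def matSqrt (ρ : Matrix α α ℂ) : Matrix α α ℂ :=
  if h : ρ.PosSemidef then h.sqrt else 0

/-- Fidelity `F(ρ,σ) = ‖√ρ √σ‖₁²`. -/
def fidelity (ρ σ : Matrix α α ℂ) : ℝ := (traceNorm (matSqrt ρ * matSqrt σ))^2

/-- Tensor (Kronecker) product of two maps on matrices. -/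
def mapKron (S₁ : Matrix α α ℂ → Matrix α α ℂ) (S₂ : Matrix β β ℂ → Matrix β β ℂ)
    (M : Matrix (α × β) (α × β) ℂ) : Matrix (α × β) (α × β) ℂ :=
  fun r c => ∑ i, ∑ j, ∑ k, ∑ l,
    S₁ (single i j 1) r.1 c.1 * S₂ (single k l 1) r.2 c.2 * M (i, k) (j, l)

/-- Induced trace norm of a map on matrices. -/
def indTraceNorm (L : Matrix α α ℂ → Matrix β β ℂ) : ℝ :=
  sSup {r | ∃ X, traceNorm X ≤ 1 ∧ r = traceNorm (L X)}

/-- Entanglement-breaking map: Kraus representation with rank-one Kraus operators. -/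
def IsEntanglementBreaking (S : Matrix α α ℂ → Matrix β β ℂ) : Prop :=
  ∃ (m : ℕ) (K : Fin m → Matrix β α ℂ),
    (∀ i, (K i).rank ≤ 1) ∧ (∑ i, (K i)ᴴ * K i = 1) ∧ ∀ X, S X = ∑ i, K i * X * (K i)ᴴ

/-- Unitary channel `X ↦ U X Uᴴ`. -/
def IsUnitaryChannel (S : Matrix α α ℂ → Matrix α α ℂ) : Prop :=
  ∃ U : Matrix α α ℂ, U ∈ Matrix.unitaryGroup α ℂ ∧ ∀ X, S X = U * X * Uᴴ

/-- Separable bipartite channel: Kraus operators of tensor product form. -/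
def IsSepChannel (T : Matrix (α₁ × β₁) (α₁ × β₁) ℂ → Matrix (α₂ × β₂) (α₂ × β₂) ℂ) : Prop :=
  ∃ (m : ℕ) (KA : Fin m → Matrix α₂ α₁ ℂ) (KB : Fin m → Matrix β₂ β₁ ℂ),
    (∑ i, (KA i ⊗ₖ KB i)ᴴ * (KA i ⊗ₖ KB i) = 1) ∧
    ∀ X, T X = ∑ i, (KA i ⊗ₖ KB i) * X * (KA i ⊗ₖ KB i)ᴴ

/-- `Id_{γ} ⊗ T ⊗ Id_{δ}` in the arrangement `(γ × α) × (β × δ)`. -/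
def idTensorMap (T : Matrix (α₁ × β₁) (α₁ × β₁) ℂ → Matrix (α₂ × β₂) (α₂ × β₂) ℂ)
    (M : Matrix ((γ × α₁) × (β₁ × δ)) ((γ × α₁) × (β₁ × δ)) ℂ) :
    Matrix ((γ × α₂) × (β₂ × δ)) ((γ × α₂) × (β₂ × δ)) ℂ :=
  fun r c => ∑ a₁ : α₁, ∑ b₁ : β₁, ∑ a₁' : α₁, ∑ b₁' : β₁,
    T (single (a₁, b₁) (a₁', b₁') 1) (r.1.2, r.2.1) (c.1.2, c.2.1) *
      M ((r.1.1, a₁), (b₁, r.2.2)) ((c.1.1, a₁'), (b₁', c.2.2))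

end Defs

/-- `n`-fold tensor power of a map on `d×d` matrices. -/
def tpow {d : ℕ} (S : Mat d → Mat d) (n : ℕ)
    (X : Matrix (Fin n → Fin d) (Fin n → Fin d) ℂ) :
    Matrix (Fin n → Fin d) (Fin n → Fin d) ℂ :=
  fun f g => ∑ f', ∑ g', X f' g' * ∏ k, S (single (f' k) (g' k) 1) (f k) (g k)

/-- `n`-fold Kronecker tensor power of a matrix. -/
def matTpow {d : ℕ} (A : Mat d) (n : ℕ) : Matrix (Fin n → Fin d) (Fin n → Fin d) ℂ :=
  fun f g => ∏ k, A (f k) (g k)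

/-- A cc-qq state `Σ_{x,y} p_{xy} |x⟩⟨x|_X ⊗ |y⟩⟨y|_Y ⊗ ρ^{xy}_{AB}`,
arranged across the cut `(X,A) : (B,Y)`. -/
def ccqqState {dX dY dA dB : ℕ} (p : Fin dX → Fin dY → ℝ)
    (ρ : Fin dX → Fin dY → Matrix (Fin dA × Fin dB) (Fin dA × Fin dB) ℂ) :
    Matrix ((Fin dX × Fin dA) × (Fin dB × Fin dY)) ((Fin dX × Fin dA) × (Fin dB × Fin dY)) ℂ :=
  fun r c => if r.1.1 = c.1.1 ∧ r.2.2 = c.2.2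
    then (p r.1.1 r.2.2 : ℂ) * ρ r.1.1 r.2.2 (r.1.2, r.2.1) (c.1.2, c.2.1) else 0



section Stmt7Proof

abbrev I2 : Type := Fin 2 × Fin 2

private lemma std_apply (i j b b' : Fin 2) :
    single i j (1 : ℂ) b b' = if i = b ∧ j = b' then 1 else 0 := rfl

private lemma sum2_collapse (f : Fin 2 → Fin 2 → ℂ) (i j : Fin 2) :
    (∑ x : Fin 2, ∑ y : Fin 2, if x = i ∧ y = j then f x y else 0) = f i j := by
  rw [Finset.sum_eq_single i (fun x _ hx => by simp [hx]) (by simp)]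
  rw [Finset.sum_eq_single j (fun y _ hy => by simp [hy]) (by simp)]
  simp

private lemma choiMatrix_entry (S : Mat 2 → Mat 2) (b i b' j : Fin 2) :
    choiMatrix S (b, i) (b', j) = S (single i j 1) b b' := by
  simp only [choiMatrix, Matrix.sum_apply, Matrix.kroneckerMap_apply, std_apply,
    mul_ite, mul_one, mul_zero]
  exact sum2_collapse (fun x y => S (single x y 1) b b') i j

private lemma hsAdjoint_entry (S : Mat 2 → Mat 2) (Y : Mat 2) (b b' : Fin 2) :
    hsAdjoint S Y b b' = ((S (single b b' 1))ᴴ * Y).trace := by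
  simp only [hsAdjoint, Matrix.sum_apply, Matrix.smul_apply, smul_eq_mul, std_apply,
    mul_ite, mul_one, mul_zero]
  exact sum2_collapse (fun x y => ((S (single x y 1))ᴴ * Y).trace) b b'

private lemma mul_std_mul_entry (A B : Mat 2) (i j x y : Fin 2) :
    (A * single i j (1 : ℂ) * Bᴴ) x y = A x i * star (B y j) := by
  have h1 : ∀ c : Fin 2, (A * single i j (1 : ℂ)) x c
      = if j = c then A x i else 0 := by
    intro c
    simp only [Matrix.mul_apply, std_apply, mul_ite, mul_one, mul_zero]
    by_cases hc : j = c
    · simp [hc, Finset.sum_ite_eq, Finset.sum_ite_eq']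
    · simp [hc]
  simp only [Matrix.mul_apply, h1, Matrix.conjTranspose_apply, ite_mul, zero_mul,
    Finset.sum_ite_eq, Finset.mem_univ, if_true]

private def phiK (K : I2 → Mat 2) (P : Matrix I2 I2 ℂ) : Mat 2 →ₗ[ℂ] Mat 2 where
  toFun X := ∑ a : I2, ∑ b : I2, P a b • (K a * X * (K b)ᴴ)
  map_add' X Y := by
    simp only [Matrix.mul_add, Matrix.add_mul, smul_add, Finset.sum_add_distrib]
  map_smul' c X := by
    simp only [RingHom.id_apply, Finset.smul_sum]
    refine Finset.sum_congr rfl fun a _ => Finset.sum_congr rfl fun b _ => ?_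
    rw [Matrix.mul_smul, Matrix.smul_mul, smul_comm]

private lemma phiK_apply (K : I2 → Mat 2) (P : Matrix I2 I2 ℂ) (X : Mat 2) :
    phiK K P X = ∑ a : I2, ∑ b : I2, P a b • (K a * X * (K b)ᴴ) := rfl

private lemma phiK_one (K : I2 → Mat 2) (X : Mat 2) :
    phiK K 1 X = ∑ a : I2, K a * X * (K a)ᴴ := by
  rw [phiK_apply]
  refine Finset.sum_congr rfl fun a _ => ?_
  rw [Finset.sum_eq_single a]
  · simp
  · intro b _ hb
    simp [Matrix.one_apply, (Ne.symm hb)]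
  · simp

private lemma choi_phiK_entry (K : I2 → Mat 2) (P : Matrix I2 I2 ℂ) (x i y j : Fin 2) :
    choiMatrix ⇑(phiK K P) (x, i) (y, j) =
      ∑ a : I2, ∑ b : I2, P a b * (K a x i * star (K b y j)) := by
  rw [choiMatrix_entry, phiK_apply]
  simp only [Matrix.sum_apply, Matrix.smul_apply, smul_eq_mul]
  exact Finset.sum_congr rfl fun a _ => Finset.sum_congr rfl fun b _ => by
    rw [mul_std_mul_entry]

private lemma posSemidef_one_add_smul {n : Type*} [Fintype n] [DecidableEq n]
    (T : Matrix n n ℂ) (hT : T.IsHermitian) (s : ℝ)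
    (hs : ∀ i, 0 ≤ 1 + s * hT.eigenvalues i) : (1 + (s : ℂ) • T).PosSemidef := by
  have hU : (hT.eigenvectorUnitary : Matrix n n ℂ) * star (hT.eigenvectorUnitary : Matrix n n ℂ) = 1 :=
    (Unitary.mem_iff.mp hT.eigenvectorUnitary.2).2
  have key : (1 + (s : ℂ) • T) =
      (hT.eigenvectorUnitary : Matrix n n ℂ) *
        Matrix.diagonal (fun i => ((1 + s * hT.eigenvalues i : ℝ) : ℂ)) *
        (star (hT.eigenvectorUnitary : Matrix n n ℂ)) := by
    have hspec := hT.spectral_theorem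
    rw [Unitary.conjStarAlgAut_apply] at hspec
    calc 1 + (s : ℂ) • T
        = (hT.eigenvectorUnitary : Matrix n n ℂ) *
            (1 + (s:ℂ) • Matrix.diagonal (RCLike.ofReal ∘ hT.eigenvalues)) *
            (star (hT.eigenvectorUnitary : Matrix n n ℂ)) := by
          rw [Matrix.mul_add, Matrix.add_mul, Matrix.mul_one, hU, Matrix.mul_smul,
            Matrix.smul_mul, ← hspec]
      _ = _ := by
          congr 2
          ext i j
          by_cases h : i = j
          · subst h
            simp only [Matrix.add_apply, Matrix.one_apply_eq, Matrix.smul_apply,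
              Matrix.diagonal_apply_eq, smul_eq_mul, Function.comp_apply]
            push_cast
            norm_num
          · simp [Matrix.one_apply_ne h, Matrix.diagonal_apply_ne _ h]
  rw [key]
  have hd : (0 : n → ℂ) ≤ (fun i => ((1 + s * hT.eigenvalues i : ℝ) : ℂ)) :=
    Pi.le_def.mpr fun i => by
      rw [Pi.zero_apply]
      exact Complex.zero_le_real.mpr (hs i)
  have h2 := (Matrix.PosSemidef.diagonal hd).mul_mul_conjTranspose_same
    (hT.eigenvectorUnitary : Matrix n n ℂ)
  rwa [← Matrix.star_eq_conjTranspose] at h2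

private lemma complex_sum_sq_pos {ι : Type*} [Fintype ι] (t : ι → ℂ) (h : ∃ i, t i ≠ 0) :
    0 < ∑ i, star (t i) * t i := by
  have he : ∀ i : ι, star (t i) * t i = ((Complex.normSq (t i) : ℝ) : ℂ) := fun i => by
    rw [Complex.star_def, Complex.normSq_eq_conj_mul_self]
  rw [Finset.sum_congr rfl fun i _ => he i, ← Complex.ofReal_sum]
  rw [Complex.zero_lt_real]
  obtain ⟨i0, hi0⟩ := h
  exact Finset.sum_pos' (fun i _ => Complex.normSq_nonneg _)
    ⟨i0, Finset.mem_univ _, Complex.normSq_pos.mpr hi0⟩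

private lemma isCPMap_phiK (K : I2 → Mat 2) (P : Matrix I2 I2 ℂ) (hP : P.PosSemidef) :
    IsCPMap ⇑(phiK K P) := by
  have hP' : ∀ a b : I2, star (P a b) = P b a := fun a b => by
    conv_rhs => rw [← hP.1]
    rfl
  rw [IsCPMap, Matrix.posSemidef_iff_dotProduct_mulVec]
  constructor
  · apply Matrix.ext
    rintro ⟨x, i⟩ ⟨y, j⟩
    rw [Matrix.conjTranspose_apply, choi_phiK_entry, choi_phiK_entry]
    simp only [star_sum, star_mul', star_star, hP']
    rw [Finset.sum_comm]
    exact Finset.sum_congr rfl fun a _ => Finset.sum_congr rfl fun b _ => by ring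
  · intro x
    have hform : star x ⬝ᵥ (choiMatrix ⇑(phiK K P) *ᵥ x)
        = star (fun c : I2 => ∑ r : I2, star (K c r.1 r.2) * x r) ⬝ᵥ
          (P *ᵥ (fun c : I2 => ∑ r : I2, star (K c r.1 r.2) * x r)) := by
      simp only [dotProduct, Matrix.mulVec, Pi.star_apply]
      have hent : ∀ w z : I2, choiMatrix ⇑(phiK K P) w z
          = ∑ a : I2, ∑ b : I2, P a b * (K a w.1 w.2 * star (K b z.1 z.2)) := by
        rintro ⟨xx, ii⟩ ⟨yy, jj⟩
        exact choi_phiK_entry K P xx ii yy jj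
      simp only [hent]
      simp only [Fintype.sum_prod_type, Fin.sum_univ_two, star_sum, star_mul', star_star,
        star_add, Finset.sum_mul, Finset.mul_sum]
      ring
    rw [hform]
    exact (Matrix.posSemidef_iff_dotProduct_mulVec.mp hP).2 _

private lemma isTPMap_phiK (K : I2 → Mat 2) (P : Matrix I2 I2 ℂ)
    (h : ∑ a : I2, ∑ b : I2, P a b • ((K b)ᴴ * K a) = 1) : IsTPMap ⇑(phiK K P) := by
  intro X
  have h2 : ((∑ a : I2, ∑ b : I2, P a b • ((K b)ᴴ * K a)) * X).trace = X.trace := by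
    rw [h, one_mul]
  rw [← h2, phiK_apply]
  rw [Matrix.sum_mul, Matrix.trace_sum, Matrix.trace_sum]
  refine Finset.sum_congr rfl fun a _ => ?_
  rw [Matrix.sum_mul, Matrix.trace_sum, Matrix.trace_sum]
  refine Finset.sum_congr rfl fun b _ => ?_
  rw [Matrix.smul_mul, Matrix.trace_smul, Matrix.trace_smul]
  congr 1
  rw [Matrix.trace_mul_cycle]

private lemma extract_zero {n : Type*} [Fintype n] [DecidableEq n] (U : Matrix n n ℂ)
    (hU : star U * U = 1) (Y : Matrix n n ℂ) (h : U * Y * star U = 0) : Y = 0 := by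
  calc Y = (star U * U) * Y * (star U * U) := by rw [hU]; simp
    _ = star U * (U * Y * star U) * U := by simp only [Matrix.mul_assoc]
    _ = 0 := by rw [h]; simp

private lemma sum_pair_ite {ι : Type*} [Fintype ι] [DecidableEq ι] (i j : ι)
    (f : ι → ι → Mat 2) (v : ℂ) :
    (∑ a : ι, ∑ b : ι, if i = a ∧ j = b then v • f a b else 0) = v • f i j := by
  rw [Finset.sum_eq_single i (fun a _ ha => Finset.sum_eq_zero fun b _ => by
    simp [Ne.symm ha]) (by simp)]
  rw [Finset.sum_eq_single j (fun b _ hb => by simp [Ne.symm hb]) (by simp)]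
  simp

private lemma sum_swap4 {ι : Type*} [Fintype ι] (F : ι → ι → ι → ι → ℂ) :
    (∑ w : ι, ∑ z : ι, ∑ a : ι, ∑ c : ι, F w z a c)
    = ∑ a : ι, ∑ c : ι, ∑ w : ι, ∑ z : ι, F w z a c := by
  have h1 : ∀ w : ι, (∑ z : ι, ∑ a : ι, ∑ c : ι, F w z a c)
      = ∑ a : ι, ∑ c : ι, ∑ z : ι, F w z a c := by
    intro w
    rw [Finset.sum_comm]
    exact Finset.sum_congr rfl fun a _ => Finset.sum_comm
  simp only [h1]
  rw [Finset.sum_comm]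
  exact Finset.sum_congr rfl fun a _ => Finset.sum_comm
end Stmt7Proof

/-- a non-unital extreme point of the convex set of qubit channels has
`C_{M†∘M}` positive definite. -/
theorem stmt7 (M : Mat 2 →ₗ[ℂ] Mat 2)
    (hExt : M ∈ Set.extremePoints ℝ {S : Mat 2 →ₗ[ℂ] Mat 2 | IsQChannel ⇑S})
    (hNonUnital : M 1 ≠ 1) :
    (choiMatrix (fun X => hsAdjoint ⇑M (M X))).PosDef := by
  classical
  obtain ⟨hMem, hextreme⟩ := hExt
  obtain ⟨hCP, hTP⟩ := hMem
  have hC : (choiMatrix ⇑M).PosSemidef := hCP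
  have hH : (choiMatrix ⇑M).IsHermitian := hC.1
  set lam : I2 → ℝ := hH.eigenvalues with hlamdef
  set U : Matrix I2 I2 ℂ := (hH.eigenvectorUnitary : Matrix I2 I2 ℂ) with hUdef
  have hUU : star U * U = 1 := (Unitary.mem_iff.mp hH.eigenvectorUnitary.2).1
  have hUU' : U * star U = 1 := (Unitary.mem_iff.mp hH.eigenvectorUnitary.2).2
  set K : I2 → Mat 2 :=
    fun a => Matrix.of fun b i => ((Real.sqrt (lam a) : ℝ) : ℂ) * U (b, i) a with hKdef
  have hKapp : ∀ (a : I2) (b i : Fin 2),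
      K a b i = ((Real.sqrt (lam a) : ℝ) : ℂ) * U (b, i) a := fun a b i => rfl
  have hlam0 : ∀ a, 0 ≤ lam a := fun a => hC.eigenvalues_nonneg a
  -- Choi entries via Kraus vectors
  have hCent : ∀ w z : I2, choiMatrix ⇑M w z = ∑ a : I2, K a w.1 w.2 * star (K a z.1 z.2) := by
    intro w z
    have hspec := hH.spectral_theorem
    rw [Unitary.conjStarAlgAut_apply] at hspec
    rw [← hUdef, ← hlamdef] at hspec
    conv_lhs => rw [hspec]
    rw [Matrix.mul_apply]
    refine Finset.sum_congr rfl fun a _ => ?_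
    rw [Matrix.mul_diagonal, Matrix.star_eq_conjTranspose, Matrix.conjTranspose_apply]
    rw [hKapp, hKapp]
    simp only [Prod.mk.eta, Function.comp_apply]
    rw [show (RCLike.ofReal (lam a) : ℂ) = ((lam a : ℝ) : ℂ) from rfl]
    rw [star_mul', Complex.star_def, Complex.conj_ofReal]
    rw [show ((Real.sqrt (lam a) : ℝ) : ℂ) * U w a
          * (((Real.sqrt (lam a) : ℝ) : ℂ) * (starRingEnd ℂ) (U z a))
        = (((Real.sqrt (lam a) * Real.sqrt (lam a) : ℝ)) : ℂ)
          * (U w a * (starRingEnd ℂ) (U z a)) by push_cast; ring]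
    rw [Real.mul_self_sqrt (hlam0 a)]
    ring
  -- Kraus form on basis matrices
  have hKrausStd : ∀ i j x y : Fin 2,
      M (single i j 1) x y = ∑ a : I2, K a x i * star (K a y j) := by
    intro i j x y
    rw [← choiMatrix_entry ⇑M x i y j]
    simpa using hCent (x, i) (y, j)
  have hMphi : M = phiK K 1 := by
    apply LinearMap.ext; intro X
    have hX : X = ∑ i : Fin 2, ∑ j : Fin 2, X i j • single i j (1 : ℂ) := by
      conv_lhs => rw [Matrix.matrix_eq_sum_single X]
      refine Finset.sum_congr rfl fun i _ => Finset.sum_congr rfl fun j _ => ?_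
      rw [Matrix.smul_single, smul_eq_mul, mul_one]
    apply Matrix.ext; intro x y
    have h1 : M X x y = ∑ i : Fin 2, ∑ j : Fin 2, X i j * M (single i j 1) x y := by
      conv_lhs => rw [hX]
      rw [map_sum]
      simp only [Matrix.sum_apply]
      refine Finset.sum_congr rfl fun i _ => ?_
      rw [map_sum]
      simp only [Matrix.sum_apply]
      refine Finset.sum_congr rfl fun j _ => ?_
      rw [M.map_smul]
      simp only [Matrix.smul_apply, smul_eq_mul]
    rw [h1, phiK_one]
    simp only [Matrix.sum_apply, Matrix.mul_apply, Matrix.conjTranspose_apply, hKrausStd]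
    simp only [Fintype.sum_prod_type, Fin.sum_univ_two, Finset.mul_sum, Finset.sum_mul,
      star_add, star_mul', star_star]
    ring
  have hTPK : ∑ a : I2, (K a)ᴴ * K a = 1 := by
    apply Matrix.ext; intro p q
    have h3 : (M (single q p 1)).trace
        = ∑ x : Fin 2, ∑ a : I2, K a x q * star (K a x p) := by
      simp only [Matrix.trace, Matrix.diag_apply]
      exact Finset.sum_congr rfl fun x _ => hKrausStd q p x x
    have h4 : (single q p (1 : ℂ)).trace = if p = q then 1 else 0 := by
      by_cases h : p = q
      · subst h
        simp [Matrix.trace, Matrix.diag_apply, std_apply, Finset.sum_ite_eq]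
      · rw [if_neg h]
        simp only [Matrix.trace, Matrix.diag_apply]
        refine Finset.sum_eq_zero fun x _ => ?_
        rw [std_apply, if_neg]
        rintro ⟨h1, h2⟩
        exact h (h2.trans h1.symm)
    have h5 : (∑ a : I2, (K a)ᴴ * K a) p q = (M (single q p 1)).trace := by
      rw [h3]
      calc (∑ a : I2, (K a)ᴴ * K a) p q
          = ∑ a : I2, ∑ x : Fin 2, star (K a x p) * K a x q := by
            simp only [Matrix.sum_apply, Matrix.mul_apply, Matrix.conjTranspose_apply]
        _ = ∑ x : Fin 2, ∑ a : I2, K a x q * star (K a x p) := by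
            rw [Finset.sum_comm]
            exact Finset.sum_congr rfl fun x _ =>
              Finset.sum_congr rfl fun a _ => mul_comm _ _
    rw [h5, hTP, h4, Matrix.one_apply]
  -- extraction of coefficients from a vanishing perturbation
  have hext0 : ∀ T : Matrix I2 I2 ℂ,
      (∀ X : Mat 2, ∑ a : I2, ∑ b : I2, T a b • (K a * X * (K b)ᴴ) = 0) →
      ∀ a b : I2, lam a ≠ 0 → lam b ≠ 0 → T a b = 0 := by
    intro T hrel a0 b0 ha hb
    set Y : Matrix I2 I2 ℂ :=
      Matrix.of (fun a b => ((Real.sqrt (lam a) * Real.sqrt (lam b) : ℝ) : ℂ) * T a b)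
      with hYdef
    have hYapp : ∀ a b : I2,
        Y a b = ((Real.sqrt (lam a) * Real.sqrt (lam b) : ℝ) : ℂ) * T a b := fun a b => rfl
    have hUYU : U * Y * star U = 0 := by
      apply Matrix.ext
      rintro ⟨x, p⟩ ⟨y, q⟩
      have h6 : ∑ a : I2, ∑ b : I2, T a b * (K a x p * star (K b y q)) = 0 := by
        have h5 := congrFun (congrFun (hrel (single p q 1)) x) y
        simp only [Matrix.sum_apply, Matrix.smul_apply, smul_eq_mul, Matrix.zero_apply] at h5
        rw [← h5]
        exact Finset.sum_congr rfl fun a _ => Finset.sum_congr rfl fun b _ => by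
          rw [mul_std_mul_entry]
      show (U * Y * star U) (x, p) (y, q) = (0 : Matrix I2 I2 ℂ) (x, p) (y, q)
      rw [Matrix.zero_apply, ← h6]
      simp only [Matrix.mul_apply, Matrix.star_eq_conjTranspose, Matrix.conjTranspose_apply,
        Finset.sum_mul]
      rw [Finset.sum_comm]
      refine Finset.sum_congr rfl fun a _ => Finset.sum_congr rfl fun b _ => ?_
      rw [hYapp, hKapp, hKapp, star_mul', Complex.star_def, Complex.conj_ofReal]
      push_cast
      ring
    have hY0 : Y = 0 := extract_zero U hUU Y hUYU
    have h8 : Y a0 b0 = 0 := by rw [hY0]; rfl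
    rw [hYapp] at h8
    rcases mul_eq_zero.mp h8 with h9 | h9
    · exfalso
      rw [Complex.ofReal_eq_zero] at h9
      have h10 : Real.sqrt (lam a0) ≠ 0 :=
        Real.sqrt_ne_zero'.mpr (lt_of_le_of_ne (hlam0 a0) (Ne.symm ha))
      have h11 : Real.sqrt (lam b0) ≠ 0 :=
        Real.sqrt_ne_zero'.mpr (lt_of_le_of_ne (hlam0 b0) (Ne.symm hb))
      exact (mul_ne_zero h10 h11) h9
    · exact h9
  -- extremality kills Hermitian trace-preserving perturbations
  have hpert : ∀ T : Matrix I2 I2 ℂ, T.IsHermitian →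
      (∑ a : I2, ∑ b : I2, T a b • ((K b)ᴴ * K a) = 0) →
      ∀ a b : I2, lam a ≠ 0 → lam b ≠ 0 → T a b = 0 := by
    intro T hT hrel
    have hsum0 : 0 ≤ ∑ i : I2, |hT.eigenvalues i| := Finset.sum_nonneg fun i _ => abs_nonneg _
    set ε : ℝ := (1 + ∑ i : I2, |hT.eigenvalues i|)⁻¹ with hε
    have hden : (0 : ℝ) < 1 + ∑ i : I2, |hT.eigenvalues i| := by linarith
    have hεpos : 0 < ε := inv_pos.mpr hden
    have hbound : ∀ s : ℝ, |s| ≤ ε → ∀ i, 0 ≤ 1 + s * hT.eigenvalues i := by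
      intro s hs i
      have h1 : |hT.eigenvalues i| ≤ ∑ j : I2, |hT.eigenvalues j| :=
        Finset.single_le_sum (f := fun j => |hT.eigenvalues j|) (fun j _ => abs_nonneg _)
          (Finset.mem_univ i)
      have h2 : |s * hT.eigenvalues i| ≤ ε * (1 + ∑ j : I2, |hT.eigenvalues j|) := by
        rw [abs_mul]
        exact mul_le_mul hs (by linarith) (abs_nonneg _) (le_of_lt hεpos)
      rw [hε, inv_mul_cancel₀ (ne_of_gt hden)] at h2
      have h3 := neg_abs_le (s * hT.eigenvalues i)
      linarith
    have hP1 : (1 + ((ε : ℝ) : ℂ) • T).PosSemidef :=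
      posSemidef_one_add_smul T hT ε (hbound ε (le_of_eq (abs_of_pos hεpos)))
    have hP2 : (1 + ((-ε : ℝ) : ℂ) • T).PosSemidef :=
      posSemidef_one_add_smul T hT (-ε)
        (hbound (-ε) (by rw [abs_neg, abs_of_pos hεpos]))
    have hTPcond : ∀ s : ℂ, ∑ a : I2, ∑ b : I2, (1 + s • T) a b • ((K b)ᴴ * K a) = 1 := by
      intro s
      have hone : ∑ a : I2, ∑ b : I2, (1 : Matrix I2 I2 ℂ) a b • ((K b)ᴴ * K a) = 1 := by
        rw [← hTPK]
        refine Finset.sum_congr rfl fun a _ => ?_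
        rw [Finset.sum_eq_single a (fun b _ hb => by simp [Matrix.one_apply, Ne.symm hb])
          (by simp)]
        simp
      calc ∑ a : I2, ∑ b : I2, (1 + s • T) a b • ((K b)ᴴ * K a)
          = (∑ a : I2, ∑ b : I2, (1 : Matrix I2 I2 ℂ) a b • ((K b)ᴴ * K a))
            + s • (∑ a : I2, ∑ b : I2, T a b • ((K b)ᴴ * K a)) := by
            simp only [Matrix.add_apply, Matrix.smul_apply, smul_eq_mul, add_smul,
              ← smul_smul, Finset.sum_add_distrib, Finset.smul_sum]
        _ = 1 := by rw [hone, hrel, smul_zero, add_zero]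
    have hQ1 : phiK K (1 + ((ε : ℝ) : ℂ) • T) ∈ {S : Mat 2 →ₗ[ℂ] Mat 2 | IsQChannel ⇑S} :=
      ⟨isCPMap_phiK K _ hP1, isTPMap_phiK K _ (hTPcond _)⟩
    have hQ2 : phiK K (1 + ((-ε : ℝ) : ℂ) • T) ∈ {S : Mat 2 →ₗ[ℂ] Mat 2 | IsQChannel ⇑S} :=
      ⟨isCPMap_phiK K _ hP2, isTPMap_phiK K _ (hTPcond _)⟩
    have hseg : M ∈ openSegment ℝ (phiK K (1 + ((ε : ℝ) : ℂ) • T))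
        (phiK K (1 + ((-ε : ℝ) : ℂ) • T)) := by
      refine ⟨1/2, 1/2, by norm_num, by norm_num, by norm_num, ?_⟩
      rw [hMphi]
      apply LinearMap.ext; intro X
      simp only [LinearMap.add_apply, LinearMap.smul_apply]
      rw [phiK_apply, phiK_apply, phiK_apply]
      simp only [Finset.smul_sum]
      rw [← Finset.sum_add_distrib]
      refine Finset.sum_congr rfl fun a _ => ?_
      rw [← Finset.sum_add_distrib]
      refine Finset.sum_congr rfl fun b _ => ?_
      apply Matrix.ext; intro x y
      simp only [Matrix.add_apply, Matrix.smul_apply, smul_eq_mul, Complex.real_smul]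
      push_cast
      ring
    obtain hflat := hextreme hQ1 hQ2 hseg
    have hrel2 : ∀ X : Mat 2, ∑ a : I2, ∑ b : I2, T a b • (K a * X * (K b)ᴴ) = 0 := by
      intro X
      have h10 : phiK K (1 + ((ε : ℝ) : ℂ) • T) X = phiK K 1 X := by rw [hflat, hMphi]
      rw [phiK_apply, phiK_apply] at h10
      simp only [Matrix.add_apply, Matrix.smul_apply, smul_eq_mul, add_smul,
        ← smul_smul, Finset.sum_add_distrib] at h10
      have h11 := add_left_cancel (h10.trans (add_zero _).symm)
      simp only [← Finset.smul_sum] at h11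
      rcases smul_eq_zero.mp h11 with h13 | h13
      · exact absurd (Complex.ofReal_eq_zero.mp h13) (ne_of_gt hεpos)
      · exact h13
    exact hext0 T hrel2
  -- linear independence of the products supported on nonzero eigenvalues
  have hindep : ∀ c : Matrix I2 I2 ℂ,
      (∀ a b : I2, (lam a = 0 ∨ lam b = 0) → c a b = 0) →
      (∑ a : I2, ∑ b : I2, c a b • ((K b)ᴴ * K a) = 0) → c = 0 := by
    intro c hsupp hrel
    have hrelH : ∑ a : I2, ∑ b : I2, (cᴴ) a b • ((K b)ᴴ * K a) = 0 := by
      have h2 : (∑ a : I2, ∑ b : I2, c a b • ((K b)ᴴ * K a))ᴴ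
          = ∑ a : I2, ∑ b : I2, (cᴴ) a b • ((K b)ᴴ * K a) := by
        calc (∑ a : I2, ∑ b : I2, c a b • ((K b)ᴴ * K a))ᴴ
            = ∑ a : I2, ∑ b : I2, star (c a b) • ((K a)ᴴ * K b) := by
              rw [Matrix.conjTranspose_sum]
              refine Finset.sum_congr rfl fun a _ => ?_
              rw [Matrix.conjTranspose_sum]
              refine Finset.sum_congr rfl fun b _ => ?_
              rw [Matrix.conjTranspose_smul, Matrix.conjTranspose_mul,
                Matrix.conjTranspose_conjTranspose]
          _ = ∑ a : I2, ∑ b : I2, (cᴴ) a b • ((K b)ᴴ * K a) := by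
              rw [Finset.sum_comm]
              exact Finset.sum_congr rfl fun a _ => Finset.sum_congr rfl fun b _ => by
                rw [Matrix.conjTranspose_apply]
      rw [← h2, hrel, Matrix.conjTranspose_zero]
    have hH1 : (c + cᴴ).IsHermitian := Matrix.isHermitian_add_transpose_self c
    have hH2 : ((Complex.I : ℂ) • (c - cᴴ)).IsHermitian := by
      show ((Complex.I : ℂ) • (c - cᴴ))ᴴ = (Complex.I : ℂ) • (c - cᴴ)
      rw [Matrix.conjTranspose_smul, Matrix.conjTranspose_sub,
        Matrix.conjTranspose_conjTranspose]
      rw [Complex.star_def, Complex.conj_I, neg_smul, smul_sub, neg_sub, smul_sub]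
    have hrel1 : ∑ a : I2, ∑ b : I2, (c + cᴴ) a b • ((K b)ᴴ * K a) = 0 := by
      simp only [Matrix.add_apply, add_smul, Finset.sum_add_distrib]
      rw [hrel, hrelH, add_zero]
    have hrel2 : ∑ a : I2, ∑ b : I2,
        ((Complex.I : ℂ) • (c - cᴴ)) a b • ((K b)ᴴ * K a) = 0 := by
      simp only [Matrix.smul_apply, Matrix.sub_apply, smul_eq_mul, ← smul_smul, sub_smul,
        smul_sub, Finset.sum_sub_distrib]
      simp only [← Finset.smul_sum]
      rw [hrel, hrelH, smul_zero, sub_zero]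
    have hz1 := hpert (c + cᴴ) hH1 hrel1
    have hz2 := hpert ((Complex.I : ℂ) • (c - cᴴ)) hH2 hrel2
    apply Matrix.ext; intro a b
    rw [Matrix.zero_apply]
    by_cases h : lam a = 0 ∨ lam b = 0
    · exact hsupp a b h
    · push_neg at h
      have e1 := hz1 a b h.1 h.2
      have e2 := hz2 a b h.1 h.2
      simp only [Matrix.add_apply, Matrix.smul_apply, Matrix.sub_apply,
        Matrix.conjTranspose_apply, smul_eq_mul] at e1 e2
      have e3 : c a b - star (c b a) = 0 := by
        rcases mul_eq_zero.mp e2 with h' | h'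
        · exact absurd h' Complex.I_ne_zero
        · exact h'
      linear_combination (e1 + e3) / 2
  -- some Kraus operator is nonzero
  have hexK : ∃ a : I2, lam a ≠ 0 := by
    by_contra hall
    push_neg at hall
    have hK0 : ∀ a : I2, K a = 0 := fun a => by
      apply Matrix.ext; intro b i
      rw [hKapp, hall a]; simp
    have h1 := hTPK
    simp only [hK0, Matrix.conjTranspose_zero, Matrix.mul_zero, Finset.sum_const,
      smul_zero] at h1
    have h00 := congrFun (congrFun h1 0) 0
    simp [Matrix.one_apply] at h00
  -- Choi matrix entries of M† ∘ M
  have hChoi2 : ∀ w z : I2, choiMatrix (fun X => hsAdjoint ⇑M (M X)) w z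
      = ∑ a : I2, ∑ c : I2,
          ((K a)ᴴ * K c) w.1 w.2 * star (((K a)ᴴ * K c) z.1 z.2) := by
    rintro ⟨b, k⟩ ⟨b', l⟩
    rw [choiMatrix_entry, hsAdjoint_entry]
    simp only [Matrix.trace, Matrix.diag_apply, Matrix.mul_apply, Matrix.conjTranspose_apply,
      hKrausStd]
    simp only [Fintype.sum_prod_type, Fin.sum_univ_two, star_add, star_mul', star_star]
    ring
  have hherm : (choiMatrix (fun X => hsAdjoint ⇑M (M X))).IsHermitian := by
    apply Matrix.ext; intro w z
    rw [Matrix.conjTranspose_apply, hChoi2, hChoi2]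
    simp only [star_sum, star_mul', star_star]
    exact Finset.sum_congr rfl fun a _ => Finset.sum_congr rfl fun c _ => by ring
  -- main case split
  by_cases htwo : ∃ a b : I2, a ≠ b ∧ lam a ≠ 0 ∧ lam b ≠ 0
  · -- at least two nonzero Kraus operators: positive definiteness
    obtain ⟨a0, a1, hne, hl0, hl1⟩ := htwo
    set e : Fin 2 → I2 := ![a0, a1] with he
    have he0 : e 0 = a0 := rfl
    have he1 : e 1 = a1 := rfl
    have hinj : Function.Injective e := by
      intro p q hpq
      fin_cases p <;> fin_cases q <;>
        simp only [Fin.zero_eta, Fin.mk_one, he0, he1] at hpq ⊢ <;>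
        first
          | rfl
          | exact absurd hpq hne
          | exact absurd hpq.symm hne
    have hlne : ∀ p : Fin 2, lam (e p) ≠ 0 := by
      intro p
      fin_cases p
      · simpa only [Fin.zero_eta, he0] using hl0
      · simpa only [Fin.mk_one, he1] using hl1
    set g : I2 → (I2 → ℂ) := fun p w => ((K (e p.1))ᴴ * K (e p.2)) w.1 w.2 with hg
    have hgli : LinearIndependent ℂ g := by
      rw [Fintype.linearIndependent_iff]
      intro coef hcoef
      set c : Matrix I2 I2 ℂ :=
        Matrix.of (fun a b => ∑ p : I2, if e p.2 = a ∧ e p.1 = b then coef p else 0)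
        with hcdef
      have hcapp : ∀ a b : I2,
          c a b = ∑ p : I2, if e p.2 = a ∧ e p.1 = b then coef p else 0 := fun a b => rfl
      have hccoef : ∀ p : I2, c (e p.2) (e p.1) = coef p := by
        intro p
        rw [hcapp]
        rw [Finset.sum_eq_single p (fun q _ hq => by
          rw [if_neg]
          rintro ⟨h1, h2⟩
          exact hq (Prod.ext (hinj h2) (hinj h1)))
          (fun h => absurd (Finset.mem_univ p) h)]
        simp
      have hcsupp : ∀ a b : I2, (lam a = 0 ∨ lam b = 0) → c a b = 0 := by
        intro a b hab
        rw [hcapp]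
        refine Finset.sum_eq_zero fun p _ => ?_
        rw [if_neg]
        rintro ⟨h1, h2⟩
        rcases hab with h | h
        · exact hlne p.2 (h1 ▸ h)
        · exact hlne p.1 (h2 ▸ h)
      have hcrel : ∑ a : I2, ∑ b : I2, c a b • ((K b)ᴴ * K a) = 0 := by
        have hmat : ∑ p : I2, coef p • ((K (e p.1))ᴴ * K (e p.2)) = 0 := by
          apply Matrix.ext; intro x y
          have h13 := congrFun hcoef (x, y)
          simp only [Finset.sum_apply, Pi.smul_apply, smul_eq_mul, Pi.zero_apply, hg] at h13
          simp only [Matrix.sum_apply, Matrix.smul_apply, smul_eq_mul, Matrix.zero_apply]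
          exact h13
        rw [← hmat]
        simp only [hcapp, Finset.sum_smul, ite_smul, zero_smul]
        have hre : ∀ a : I2, (∑ b : I2, ∑ p : I2,
            if e p.2 = a ∧ e p.1 = b then coef p • ((K b)ᴴ * K a) else 0)
            = ∑ p : I2, ∑ b : I2,
            if e p.2 = a ∧ e p.1 = b then coef p • ((K b)ᴴ * K a) else 0 :=
          fun a => Finset.sum_comm
        simp only [hre]
        rw [Finset.sum_comm]
        refine Finset.sum_congr rfl fun p _ => ?_
        exact sum_pair_ite (e p.2) (e p.1) (fun a b => (K b)ᴴ * K a) (coef p)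
      have hc0 := hindep c hcsupp hcrel
      intro p
      rw [← hccoef p, hc0]
      simp
    have hcard : Fintype.card I2 = Module.finrank ℂ (I2 → ℂ) := (Module.finrank_pi ℂ).symm
    have hspan : Submodule.span ℂ (Set.range g) = ⊤ :=
      hgli.span_eq_top_of_card_eq_finrank hcard
    refine Matrix.posDef_iff_dotProduct_mulVec.mpr ⟨hherm, ?_⟩
    intro x hx
    set t : I2 → I2 → ℂ :=
      fun a c => ∑ w : I2, star (((K a)ᴴ * K c) w.1 w.2) * x w with ht
    have hform : star x ⬝ᵥ (choiMatrix (fun X => hsAdjoint ⇑M (M X)) *ᵥ x)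
        = ∑ a : I2, ∑ c : I2, star (t a c) * t a c := by
      have hsplit : ∀ a c : I2, star (t a c) * t a c
          = ∑ w : I2, ∑ z : I2, (((K a)ᴴ * K c) w.1 w.2 * star (x w))
              * (star (((K a)ᴴ * K c) z.1 z.2) * x z) := by
        intro a c
        simp only [ht, star_sum, star_mul', star_star]
        rw [Finset.sum_mul]
        refine Finset.sum_congr rfl fun w _ => ?_
        rw [Finset.mul_sum]
      have hdot : star x ⬝ᵥ (choiMatrix (fun X => hsAdjoint ⇑M (M X)) *ᵥ x)
          = ∑ w : I2, ∑ z : I2, ∑ a : I2, ∑ c : I2,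
              (((K a)ᴴ * K c) w.1 w.2 * star (x w))
                * (star (((K a)ᴴ * K c) z.1 z.2) * x z) := by
        simp only [dotProduct, Matrix.mulVec, Pi.star_apply]
        refine Finset.sum_congr rfl fun w _ => ?_
        rw [Finset.mul_sum]
        refine Finset.sum_congr rfl fun z _ => ?_
        rw [hChoi2]
        simp only [Finset.sum_mul, Finset.mul_sum]
        exact Finset.sum_congr rfl fun a _ => Finset.sum_congr rfl fun c _ => by ring
      rw [hdot, sum_swap4]
      exact Finset.sum_congr rfl fun a _ => Finset.sum_congr rfl fun c _ => (hsplit a c).symm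
    by_cases hall : ∀ a c : I2, t a c = 0
    · exfalso
      apply hx
      let Zs : Submodule ℂ (I2 → ℂ) :=
        { carrier := {y | ∑ w : I2, star (y w) * x w = 0}
          add_mem' := by
            intro u v hu hv
            simp only [Set.mem_setOf_eq, Pi.add_apply, star_add, add_mul,
              Finset.sum_add_distrib] at *
            rw [hu, hv, add_zero]
          zero_mem' := by simp
          smul_mem' := by
            intro r u hu
            simp only [Set.mem_setOf_eq, Pi.smul_apply, smul_eq_mul, star_mul',
              mul_assoc] at *
            rw [← Finset.mul_sum, hu, mul_zero] }
      have hle : Submodule.span ℂ (Set.range g) ≤ Zs := by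
        rw [Submodule.span_le]
        rintro y ⟨p, rfl⟩
        show ∑ w : I2, star (g p w) * x w = 0
        have h21 := hall (e p.1) (e p.2)
        simp only [ht] at h21
        simpa only [hg] using h21
      have hmem : ∀ y : I2 → ℂ, ∑ w : I2, star (y w) * x w = 0 := by
        intro y
        have h22 : (⊤ : Submodule ℂ (I2 → ℂ)) ≤ Zs := hspan ▸ hle
        exact h22 Submodule.mem_top
      funext w0
      have h20 := hmem (Pi.single w0 1)
      rw [Finset.sum_eq_single w0 (fun w _ hw => by simp [Pi.single_apply, hw]) (by simp)]
        at h20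
      simpa using h20
    · push_neg at hall
      obtain ⟨a, c, hac⟩ := hall
      rw [hform]
      have hpos := complex_sum_sq_pos (fun p : I2 × I2 => t p.1 p.2) ⟨(a, c), hac⟩
      rwa [Fintype.sum_prod_type] at hpos
  · -- single Kraus operator: M is unital, contradiction
    exfalso
    obtain ⟨a0, ha0⟩ := hexK
    have huniq : ∀ b : I2, lam b ≠ 0 → b = a0 := by
      intro b hb
      by_contra hneq
      exact htwo ⟨b, a0, hneq, hb, ha0⟩
    have hK0 : ∀ b : I2, b ≠ a0 → K b = 0 := by
      intro b hb
      have hlb : lam b = 0 := by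
        by_contra h
        exact hb (huniq b h)
      apply Matrix.ext; intro xx ii
      rw [hKapp, hlb]; simp
    have hs : ∑ a : I2, (K a)ᴴ * K a = (K a0)ᴴ * K a0 :=
      Finset.sum_eq_single a0 (fun b _ hb => by rw [hK0 b hb]; simp) (by simp)
    have h1 : (K a0)ᴴ * K a0 = 1 := by rw [← hs]; exact hTPK
    have h2 : M 1 = K a0 * (K a0)ᴴ := by
      rw [hMphi, phiK_one]
      rw [Finset.sum_eq_single a0 (fun b _ hb => by rw [hK0 b hb]; simp) (by simp)]
      rw [Matrix.mul_one]
    exact hNonUnital (by rw [h2, ← mul_eq_one_comm.mp h1])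

end
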